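/- arXiv:2011.11580 — 3 statements merged into one kernel-verified Lean document; each statement's English description precedes it below -/
import Mathlib

section
/- Let n ≥ 1 and d = 2ⁿ. Let 𝒰 be a unitary ensemble on ℂ^d and ℰ : M_d → M_d a quantum channel such that the shadow channel M_{𝒰,ℰ} is invertible as a linear map. Let O be a Hermitian matrix and ρ a density matrix on ℂ^d. Then the variance of the single-sample estimator satisfies E_{U∼𝒰} Σ_{b=1}^d ⟨b|ℰ(U ρ U†)|b⟩ · ( tr(O · M⁻¹_{𝒰,ℰ}(U†|b⟩⟨b|U)) − tr(O ρ) )² ≤ ‖O − (tr(O)/d)·I‖²_{shadow,𝒰,ℰ}. -/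
open scoped ComplexOrder Kronecker
open Matrix MeasureTheory

noncomputable section

namespace NoisyShadows

/-- The shadow channel `M_{𝒰,ℰ}` of the unitary ensemble `U` (a nonempty finite family,
averaged uniformly) and the map `E`:
`M(A) = E_{U∼𝒰} Σ_b ⟨b|E(U A U†)|b⟩ · U†|b⟩⟨b|U`. -/
def shadowChannel {κ ι : Type*} [Fintype κ] [Fintype ι] [DecidableEq ι]
    (U : κ → Matrix ι ι ℂ) (E : Matrix ι ι ℂ → Matrix ι ι ℂ)
    (A : Matrix ι ι ℂ) : Matrix ι ι ℂ :=
  (Fintype.card κ : ℂ)⁻¹ • ∑ k : κ, ∑ b : ι,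
    (E (U k * A * (U k)ᴴ)) b b • ((U k)ᴴ * Matrix.single b b 1 * U k)

/-- A positive map sends positive semidefinite matrices to positive semidefinite matrices. -/
def IsPositiveMap {ι : Type*} [Fintype ι] (Φ : Matrix ι ι ℂ → Matrix ι ι ℂ) : Prop :=
  ∀ A : Matrix ι ι ℂ, A.PosSemidef → (Φ A).PosSemidef

/-- The blockwise map `id_{M_k} ⊗ Φ`. -/
def tensorIdMap (k : ℕ) {ι : Type*} (Φ : Matrix ι ι ℂ → Matrix ι ι ℂ) :
    Matrix (Fin k × ι) (Fin k × ι) ℂ → Matrix (Fin k × ι) (Fin k × ι) ℂ :=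
  fun M => Matrix.of fun p q => Φ (Matrix.of fun a b => M (p.1, a) (q.1, b)) p.2 q.2

/-- Complete positivity. -/
def IsCompletelyPositive {ι : Type*} [Fintype ι] (Φ : Matrix ι ι ℂ → Matrix ι ι ℂ) : Prop :=
  ∀ k : ℕ, 1 ≤ k → IsPositiveMap (tensorIdMap k Φ)

/-- Trace preservation. -/
def IsTracePreserving {ι : Type*} [Fintype ι] (Φ : Matrix ι ι ℂ → Matrix ι ι ℂ) : Prop :=
  ∀ A : Matrix ι ι ℂ, (Φ A).trace = A.trace

/-- A quantum channel is a completely positive trace-preserving linear map. -/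
def IsQuantumChannel {ι : Type*} [Fintype ι] (Φ : Matrix ι ι ℂ → Matrix ι ι ℂ) : Prop :=
  IsCompletelyPositive Φ ∧ IsTracePreserving Φ

/-- A density matrix: positive semidefinite with trace one. -/
def IsDensityMatrix {ι : Type*} [Fintype ι] (σ : Matrix ι ι ℂ) : Prop :=
  σ.PosSemidef ∧ σ.trace = 1

/-- All members of the family are unitary matrices. -/
def IsUnitaryEnsemble {κ ι : Type*} [Fintype ι] [DecidableEq ι]
    (U : κ → Matrix ι ι ℂ) : Prop :=
  ∀ k, U k ∈ Matrix.unitaryGroup ι ℂ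

/-- `Ψ` is the adjoint of `Φ` with respect to the Hilbert–Schmidt inner product
`⟨A,B⟩ = tr(A† B)`. -/
def IsHSAdjoint {ι : Type*} [Fintype ι] (Φ Ψ : Matrix ι ι ℂ → Matrix ι ι ℂ) : Prop :=
  ∀ A B : Matrix ι ι ℂ, (Aᴴ * Φ B).trace = ((Ψ A)ᴴ * B).trace

/-- Square of the shadow seminorm `‖O‖²_{shadow,𝒰,ℰ}`, expressed with a given adjoint
`MinvAdj` of the inverse shadow channel: the supremum over density matrices `σ` of
`E_{U∼𝒰} Σ_b ⟨b|E(UσU†)|b⟩ ⟨b|U M^{-1,†}(O) U†|b⟩²`. -/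
def shadowNormSq {κ ι : Type*} [Fintype κ] [Fintype ι] [DecidableEq ι]
    (U : κ → Matrix ι ι ℂ) (E MinvAdj : Matrix ι ι ℂ → Matrix ι ι ℂ)
    (O : Matrix ι ι ℂ) : ℝ :=
  sSup {x : ℝ | ∃ σ : Matrix ι ι ℂ, IsDensityMatrix σ ∧
    x = ((Fintype.card κ : ℂ)⁻¹ * ∑ k : κ, ∑ b : ι,
      (E (U k * σ * (U k)ᴴ)) b b * ((U k * MinvAdj O * (U k)ᴴ) b b) ^ 2).re}

/-- The shadow seminorm `‖O‖_{shadow,𝒰,ℰ}`. -/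
def shadowNorm {κ ι : Type*} [Fintype κ] [Fintype ι] [DecidableEq ι]
    (U : κ → Matrix ι ι ℂ) (E MinvAdj : Matrix ι ι ℂ → Matrix ι ι ℂ)
    (O : Matrix ι ι ℂ) : ℝ :=
  Real.sqrt (shadowNormSq U E MinvAdj O)

/-- `Tr(ℰ∘diag) = Σ_b ⟨b|ℰ(|b⟩⟨b|)|b⟩`. -/
def diagTrace {ι : Type*} [Fintype ι] [DecidableEq ι]
    (E : Matrix ι ι ℂ → Matrix ι ι ℂ) : ℂ :=
  ∑ b : ι, (E (Matrix.single b b 1)) b b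

/-- The depolarizing map `D_{d,f}(A) = f·A + (1−f)·tr(A)·I/d` (where `d` is the size of the
index type). -/
def depol (ι : Type*) [Fintype ι] [DecidableEq ι] (f : ℂ)
    (A : Matrix ι ι ℂ) : Matrix ι ι ℂ :=
  f • A + ((1 - f) * (A.trace / (Fintype.card ι : ℂ))) • (1 : Matrix ι ι ℂ)

/-- `t`-fold Kronecker power of a matrix. -/
def kpow {ι : Type*} (t : ℕ) (U : Matrix ι ι ℂ) :
    Matrix (Fin t → ι) (Fin t → ι) ℂ :=
  Matrix.of fun x y => ∏ j, U (x j) (y j)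

instance {ι : Type*} [Fintype ι] [DecidableEq ι] :
    MeasurableSpace (Matrix.unitaryGroup ι ℂ) := borel _

/-- `𝒰` is a unitary `t`-design: the `t`-fold ensemble twirl coincides with the `t`-fold twirl
over the Haar probability measure on the unitary group. -/
def IsUnitaryDesign {κ ι : Type*} [Fintype κ] [Fintype ι] [DecidableEq ι]
    (U : κ → Matrix ι ι ℂ) (t : ℕ) : Prop :=
  ∃ μ : Measure (Matrix.unitaryGroup ι ℂ), μ.IsHaarMeasure ∧ IsProbabilityMeasure μ ∧
    ∀ A : Matrix (Fin t → ι) (Fin t → ι) ℂ, ∀ x y : Fin t → ι,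
      (Fintype.card κ : ℂ)⁻¹ * ∑ k : κ, (kpow t (U k) * A * (kpow t (U k))ᴴ) x y
        = ∫ V : Matrix.unitaryGroup ι ℂ,
            (kpow t (V : Matrix ι ι ℂ) * A * (kpow t (V : Matrix ι ι ℂ))ᴴ) x y ∂μ

/-- Kronecker product of an `n`-indexed family of `2×2` matrices. -/
def kprod {n : ℕ} (A : Fin n → Matrix (Fin 2) (Fin 2) ℂ) :
    Matrix (Fin n → Fin 2) (Fin n → Fin 2) ℂ :=
  Matrix.of fun x y => ∏ i, A i (x i) (y i)

/-- Spectral (operator) norm of a matrix. -/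
def spNorm {ι : Type*} [Fintype ι] [DecidableEq ι] (A : Matrix ι ι ℂ) : ℝ :=
  ‖Matrix.toEuclideanCLM (𝕜 := ℂ) A‖


section Aux

variable {ι : Type*} [Fintype ι] [DecidableEq ι]

private lemma psd_diag_nonneg {M : Matrix ι ι ℂ} (hM : M.PosSemidef) (b : ι) :
    0 ≤ M b b := by
  have := hM.dotProduct_mulVec_nonneg (Pi.single b 1)
  simpa [dotProduct, Matrix.mulVec, Pi.single_apply] using this

private lemma herm_decomp {A : Matrix ι ι ℂ} (hA : A.IsHermitian) :
    ∃ P Q : Matrix ι ι ℂ, P.PosSemidef ∧ Q.PosSemidef ∧ A = P - Q := by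
  classical
  set V : Matrix ι ι ℂ := (hA.eigenvectorUnitary : Matrix ι ι ℂ) with hV
  refine ⟨V * Matrix.diagonal (fun i => ((max (hA.eigenvalues i) 0 : ℝ) : ℂ)) * Vᴴ,
          V * Matrix.diagonal (fun i => ((max (-hA.eigenvalues i) 0 : ℝ) : ℂ)) * Vᴴ, ?_, ?_, ?_⟩
  · exact (Matrix.posSemidef_diagonal_iff.mpr fun i =>
      Complex.zero_le_real.mpr (le_max_right _ _)).mul_mul_conjTranspose_same V
  · exact (Matrix.posSemidef_diagonal_iff.mpr fun i =>
      Complex.zero_le_real.mpr (le_max_right _ _)).mul_mul_conjTranspose_same V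
  · have h := hA.spectral_theorem
    rw [← Matrix.sub_mul, ← Matrix.mul_sub, Matrix.diagonal_sub]
    have h2 : (Matrix.diagonal fun i => ((max (hA.eigenvalues i) 0 : ℝ) : ℂ)
          - ((max (-hA.eigenvalues i) 0 : ℝ) : ℂ))
        = Matrix.diagonal (RCLike.ofReal ∘ hA.eigenvalues) := by
      apply congrArg
      funext i
      rw [← Complex.ofReal_sub]
      show _ = ((hA.eigenvalues i : ℝ) : ℂ)
      norm_cast
      rcases le_total (hA.eigenvalues i) 0 with h'|h'
      · rw [max_eq_right h', max_eq_left (neg_nonneg.mpr h')]; ring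
      · rw [max_eq_left h', max_eq_right (neg_nonpos.mpr h')]; ring
    rw [h2]
    exact h

private lemma isPositiveMap_of_CP {Φ : Matrix ι ι ℂ → Matrix ι ι ℂ}
    (h : IsCompletelyPositive Φ) : IsPositiveMap Φ := by
  intro A hA
  have h1 := h 1 le_rfl (A.submatrix Prod.snd Prod.snd) (hA.submatrix _)
  have key : Φ A = (tensorIdMap 1 Φ (A.submatrix Prod.snd Prod.snd)).submatrix
      (fun i => ((0 : Fin 1), i)) (fun i => ((0 : Fin 1), i)) := by
    ext i j
    simp only [tensorIdMap, Matrix.submatrix_apply, Matrix.of_apply]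
    congr 1
  rw [key]
  exact h1.submatrix _

private lemma posmap_isHermitian {Φ : Matrix ι ι ℂ →ₗ[ℂ] Matrix ι ι ℂ}
    (hΦ : IsPositiveMap ⇑Φ) {A : Matrix ι ι ℂ} (hA : A.IsHermitian) :
    (Φ A).IsHermitian := by
  obtain ⟨P, Q, hP, hQ, rfl⟩ := herm_decomp hA
  rw [map_sub]
  exact (hΦ P hP).1.sub (hΦ Q hQ).1

private lemma posmap_conjTranspose {Φ : Matrix ι ι ℂ →ₗ[ℂ] Matrix ι ι ℂ}
    (hΦ : IsPositiveMap ⇑Φ) (A : Matrix ι ι ℂ) :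
    Φ (Aᴴ) = (Φ A)ᴴ := by
  set H : Matrix ι ι ℂ := (2⁻¹ : ℂ) • (A + Aᴴ) with hHdef
  set K : Matrix ι ι ℂ := (-Complex.I * 2⁻¹) • (A - Aᴴ) with hKdef
  have hH : H.IsHermitian := by
    show Hᴴ = H
    rw [hHdef, Matrix.conjTranspose_smul, Matrix.conjTranspose_add,
      Matrix.conjTranspose_conjTranspose]
    rw [add_comm]
    congr 1
    norm_num [Complex.ext_iff]
  have hK : K.IsHermitian := by
    show Kᴴ = K
    rw [hKdef, Matrix.conjTranspose_smul, Matrix.conjTranspose_sub,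
      Matrix.conjTranspose_conjTranspose]
    rw [show star (-Complex.I * 2⁻¹) = Complex.I * 2⁻¹ by
      simp [Complex.ext_iff, Complex.conj_I]]
    rw [show Aᴴ - A = -(A - Aᴴ) from (neg_sub _ _).symm, smul_neg, ← neg_smul]
    congr 1
    ring
  have hA' : A = H + Complex.I • K := by
    rw [hHdef, hKdef, smul_smul]
    have : Complex.I * (-Complex.I * 2⁻¹) = (2⁻¹ : ℂ) := by
      have := Complex.I_mul_I
      ring_nf
      rw [Complex.I_sq]
      ring
    rw [this, smul_add, smul_sub]
    module
  have hAH : Aᴴ = H - Complex.I • K := by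
    have h2 : (Complex.I • K)ᴴ = -(Complex.I • K) := by
      rw [Matrix.conjTranspose_smul, hK.eq, Complex.star_def, Complex.conj_I, neg_smul]
    calc Aᴴ = (H + Complex.I • K)ᴴ := by rw [← hA']
    _ = Hᴴ + (Complex.I • K)ᴴ := Matrix.conjTranspose_add _ _
    _ = H - Complex.I • K := by rw [hH.eq, h2, sub_eq_add_neg]
  have hΦH := (posmap_isHermitian hΦ hH).eq
  have hΦK := (posmap_isHermitian hΦ hK).eq
  have h3 : (Complex.I • Φ K)ᴴ = -(Complex.I • Φ K) := by
    rw [Matrix.conjTranspose_smul, hΦK, Complex.star_def, Complex.conj_I, neg_smul]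
  calc Φ Aᴴ = Φ (H - Complex.I • K) := by rw [← hAH]
  _ = Φ H - Complex.I • Φ K := by simp only [map_sub, _root_.map_smul]
  _ = (Φ H + Complex.I • Φ K)ᴴ := by
      rw [Matrix.conjTranspose_add, hΦH, h3, sub_eq_add_neg]
  _ = (Φ (H + Complex.I • K))ᴴ := by simp only [map_add, _root_.map_smul]
  _ = (Φ A)ᴴ := by rw [← hA']

private lemma stdBasis_herm (b : ι) :
    (Matrix.single b b (1 : ℂ))ᴴ = Matrix.single b b 1 := by
  ext i j
  simp only [Matrix.conjTranspose_apply, Matrix.single, Matrix.of_apply]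
  by_cases h1 : b = i <;> by_cases h2 : b = j <;> simp [h1, h2]

private lemma trace_stdBasis_mul (b : ι) (X : Matrix ι ι ℂ) :
    (Matrix.single b b 1 * X).trace = X b b := by
  classical
  simp [Matrix.trace, Matrix.diag, Matrix.mul_apply, Matrix.single,
    ite_and, Finset.sum_ite_eq, Finset.sum_ite_eq']

variable {κ : Type*} [Fintype κ]

/-- The shadow channel as a linear map. -/
private def shadowLin (U : κ → Matrix ι ι ℂ)
    (E : Matrix ι ι ℂ →ₗ[ℂ] Matrix ι ι ℂ) :
    Matrix ι ι ℂ →ₗ[ℂ] Matrix ι ι ℂ where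
  toFun := shadowChannel U ⇑E
  map_add' A B := by
    unfold shadowChannel
    rw [← smul_add, ← Finset.sum_add_distrib]
    refine congrArg _ (Finset.sum_congr rfl fun k _ => ?_)
    rw [← Finset.sum_add_distrib]
    refine Finset.sum_congr rfl fun b _ => ?_
    rw [Matrix.mul_add, Matrix.add_mul, map_add, Matrix.add_apply, add_smul]
  map_smul' c A := by
    unfold shadowChannel
    simp only [RingHom.id_apply]
    rw [smul_comm]
    congr 1
    rw [Finset.smul_sum]
    refine Finset.sum_congr rfl fun k _ => ?_
    rw [Finset.smul_sum]
    refine Finset.sum_congr rfl fun b _ => ?_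
    rw [Matrix.mul_smul, Matrix.smul_mul, _root_.map_smul, Matrix.smul_apply,
      smul_eq_mul, mul_smul]


private lemma Bherm (V : Matrix ι ι ℂ) (b : ι) :
    (Vᴴ * Matrix.single b b 1 * V)ᴴ = Vᴴ * Matrix.single b b 1 * V := by
  rw [Matrix.conjTranspose_mul, Matrix.conjTranspose_mul,
    Matrix.conjTranspose_conjTranspose, stdBasis_herm, Matrix.mul_assoc]

private lemma herm_mul_trace_real {A B : Matrix ι ι ℂ}
    (hA : A.IsHermitian) (hB : B.IsHermitian) :
    (((A * B).trace.re : ℝ) : ℂ) = (A * B).trace := by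
  rw [← Complex.conj_eq_iff_re]
  calc (starRingEnd ℂ) ((A * B).trace) = ((A * B)ᴴ).trace := by
        rw [Matrix.trace_conjTranspose]; rfl
  _ = (Bᴴ * Aᴴ).trace := by rw [Matrix.conjTranspose_mul]
  _ = (B * A).trace := by rw [hA.eq, hB.eq]
  _ = (A * B).trace := Matrix.trace_mul_comm _ _

private lemma real_var_bound {κ' ι' : Type*} [Fintype κ'] [Fintype ι']
    (c : ℝ) (p x : κ' → ι' → ℝ) (m : ℝ)
    (hptot : c * ∑ k, ∑ b, p k b = 1)
    (hmean : c * ∑ k, ∑ b, p k b * x k b = m) :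
    c * ∑ k, ∑ b, p k b * (x k b - m) ^ 2 ≤ c * ∑ k, ∑ b, p k b * x k b ^ 2 := by
  have e2 : ∑ k, ∑ b, p k b * (x k b - m) ^ 2
      = (∑ k, ∑ b, p k b * x k b ^ 2) - 2 * m * (∑ k, ∑ b, p k b * x k b)
        + m ^ 2 * (∑ k, ∑ b, p k b) := by
    rw [Finset.mul_sum, Finset.mul_sum, ← Finset.sum_sub_distrib, ← Finset.sum_add_distrib]
    refine Finset.sum_congr rfl fun k _ => ?_
    rw [Finset.mul_sum, Finset.mul_sum, ← Finset.sum_sub_distrib, ← Finset.sum_add_distrib]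
    exact Finset.sum_congr rfl fun b _ => by ring
  have key : c * ∑ k, ∑ b, p k b * (x k b - m) ^ 2
      = c * (∑ k, ∑ b, p k b * x k b ^ 2) - m ^ 2 := by
    rw [e2]
    have h3 : c * ((∑ k, ∑ b, p k b * x k b ^ 2)
          - 2 * m * (∑ k, ∑ b, p k b * x k b) + m ^ 2 * (∑ k, ∑ b, p k b))
        = c * (∑ k, ∑ b, p k b * x k b ^ 2) - 2 * m * (c * ∑ k, ∑ b, p k b * x k b)
          + m ^ 2 * (c * ∑ k, ∑ b, p k b) := by ring
    rw [h3, hmean, hptot]; ring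
  rw [key]
  nlinarith [sq_nonneg m]

variable [Nonempty κ]

private lemma trace_shadowChannel (U : κ → Matrix ι ι ℂ) (hU : IsUnitaryEnsemble U)
    (E : Matrix ι ι ℂ →ₗ[ℂ] Matrix ι ι ℂ) (hTP : IsTracePreserving ⇑E)
    (A : Matrix ι ι ℂ) : (shadowChannel U ⇑E A).trace = A.trace := by
  have hUU : ∀ k, U k * (U k)ᴴ = 1 := fun k => by
    have := (Matrix.mem_unitaryGroup_iff).1 (hU k)
    rwa [Matrix.star_eq_conjTranspose] at this
  have hU'U : ∀ k, (U k)ᴴ * U k = 1 := fun k => by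
    have := (Matrix.mem_unitaryGroup_iff').1 (hU k)
    rwa [Matrix.star_eq_conjTranspose] at this
  have hB : ∀ (k : κ) (b : ι), ((U k)ᴴ * Matrix.single b b 1 * U k).trace = 1 := by
    intro k b
    rw [Matrix.trace_mul_cycle, hUU k, one_mul, Matrix.trace_single_eq_same]
  have h1 : ∀ k : κ, (∑ b : ι, (E (U k * A * (U k)ᴴ)) b b
      * ((U k)ᴴ * Matrix.single b b 1 * U k).trace) = A.trace := by
    intro k
    have h2 : (∑ b : ι, (E (U k * A * (U k)ᴴ)) b b) = (E (U k * A * (U k)ᴴ)).trace := rfl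
    calc (∑ b : ι, (E (U k * A * (U k)ᴴ)) b b
          * ((U k)ᴴ * Matrix.single b b 1 * U k).trace)
        = ∑ b : ι, (E (U k * A * (U k)ᴴ)) b b := by
          refine Finset.sum_congr rfl fun b _ => ?_
          rw [hB k b, mul_one]
    _ = (E (U k * A * (U k)ᴴ)).trace := h2
    _ = (U k * A * (U k)ᴴ).trace := hTP _
    _ = A.trace := by rw [Matrix.trace_mul_cycle, hU'U k, one_mul]
  unfold shadowChannel
  rw [Matrix.trace_smul]
  simp only [Matrix.trace_sum, Matrix.trace_smul, smul_eq_mul]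
  rw [Finset.sum_congr rfl fun k _ => h1 k, Finset.sum_const, Finset.card_univ,
    nsmul_eq_mul]
  rw [← mul_assoc, inv_mul_cancel₀ (Nat.cast_ne_zero.2 Fintype.card_ne_zero), one_mul]

private lemma shadow_conjT (U : κ → Matrix ι ι ℂ)
    (E : Matrix ι ι ℂ →ₗ[ℂ] Matrix ι ι ℂ) (hconj : ∀ X, E (Xᴴ) = (E X)ᴴ)
    (A : Matrix ι ι ℂ) :
    shadowChannel U ⇑E (Aᴴ) = (shadowChannel U ⇑E A)ᴴ := by
  unfold shadowChannel
  rw [Matrix.conjTranspose_smul]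
  rw [show star ((Fintype.card κ : ℂ))⁻¹ = ((Fintype.card κ : ℂ))⁻¹ by
    rw [star_inv₀]; norm_cast]
  congr 1
  rw [Matrix.conjTranspose_sum]
  refine Finset.sum_congr rfl fun k _ => ?_
  rw [Matrix.conjTranspose_sum]
  refine Finset.sum_congr rfl fun b _ => ?_
  rw [Matrix.conjTranspose_smul, Bherm]
  have h1 : U k * Aᴴ * (U k)ᴴ = (U k * A * (U k)ᴴ)ᴴ := by
    rw [Matrix.conjTranspose_mul, Matrix.conjTranspose_mul,
      Matrix.conjTranspose_conjTranspose, Matrix.mul_assoc]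
  rw [h1, hconj, Matrix.conjTranspose_apply]

private lemma density_diag_facts (U : κ → Matrix ι ι ℂ) (hU : IsUnitaryEnsemble U)
    (E : Matrix ι ι ℂ →ₗ[ℂ] Matrix ι ι ℂ) (hpos : IsPositiveMap ⇑E)
    (hTP : IsTracePreserving ⇑E)
    {σ : Matrix ι ι ℂ} (hσ : IsDensityMatrix σ) (k : κ) (b : ι) :
    (E (U k * σ * (U k)ᴴ)) b b = (((E (U k * σ * (U k)ᴴ)) b b).re : ℂ)
    ∧ 0 ≤ ((E (U k * σ * (U k)ᴴ)) b b).re ∧ ((E (U k * σ * (U k)ᴴ)) b b).re ≤ 1 := by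
  have hU'U : (U k)ᴴ * U k = 1 := by
    have := (Matrix.mem_unitaryGroup_iff').1 (hU k)
    rwa [Matrix.star_eq_conjTranspose] at this
  have hpsd : ∀ b' : ι, 0 ≤ (E (U k * σ * (U k)ᴴ)) b' b' := fun b' =>
    psd_diag_nonneg (hpos _ (hσ.1.mul_mul_conjTranspose_same (U k))) b'
  have hre : ∀ b' : ι, (E (U k * σ * (U k)ᴴ)) b' b'
      = (((E (U k * σ * (U k)ᴴ)) b' b').re : ℂ) := by
    intro b'
    have h := hpsd b'
    rw [Complex.le_def] at h
    exact (Complex.ext (by simp) (by simpa using h.2)).symm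
  have hre0 : ∀ b' : ι, 0 ≤ ((E (U k * σ * (U k)ᴴ)) b' b').re := by
    intro b'
    have h := hpsd b'
    rw [Complex.le_def] at h
    simpa using h.1
  refine ⟨hre b, hre0 b, ?_⟩
  have hsum : (∑ b' : ι, ((E (U k * σ * (U k)ᴴ)) b' b').re) = 1 := by
    have h2 : (∑ b' : ι, (E (U k * σ * (U k)ᴴ)) b' b') = (E (U k * σ * (U k)ᴴ)).trace := rfl
    have h3 : (E (U k * σ * (U k)ᴴ)).trace = 1 := by
      rw [hTP, Matrix.trace_mul_cycle, hU'U, one_mul, hσ.2]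
    have h4 : (∑ b' : ι, (E (U k * σ * (U k)ᴴ)) b' b').re = 1 := by
      rw [h2, h3]; rfl
    rw [← h4, Complex.re_sum]
  calc ((E (U k * σ * (U k)ᴴ)) b b).re
      ≤ ∑ b' : ι, ((E (U k * σ * (U k)ᴴ)) b' b').re :=
        Finset.single_le_sum (fun b' _ => hre0 b') (Finset.mem_univ b)
  _ = 1 := hsum


end Aux


/-- the variance of the single-sample estimator is bounded by the squared shadow
seminorm of the traceless part of the observable. -/
theorem stmt_1 {n : ℕ} (hn : 1 ≤ n) {κ : Type*} [Fintype κ] [Nonempty κ]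
    (U : κ → Matrix (Fin (2 ^ n)) (Fin (2 ^ n)) ℂ) (hU : IsUnitaryEnsemble U)
    (E : Matrix (Fin (2 ^ n)) (Fin (2 ^ n)) ℂ →ₗ[ℂ] Matrix (Fin (2 ^ n)) (Fin (2 ^ n)) ℂ)
    (hE : IsQuantumChannel (⇑E))
    (Minv MinvAdj : Matrix (Fin (2 ^ n)) (Fin (2 ^ n)) ℂ → Matrix (Fin (2 ^ n)) (Fin (2 ^ n)) ℂ)
    (hMinvL : Function.LeftInverse Minv (shadowChannel U (⇑E)))
    (hMinvR : Function.RightInverse Minv (shadowChannel U (⇑E)))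
    (hAdj : IsHSAdjoint Minv MinvAdj)
    (O : Matrix (Fin (2 ^ n)) (Fin (2 ^ n)) ℂ) (hO : O.IsHermitian)
    (ρ : Matrix (Fin (2 ^ n)) (Fin (2 ^ n)) ℂ) (hρ : IsDensityMatrix ρ) :
    ((Fintype.card κ : ℂ)⁻¹ * ∑ k : κ, ∑ b : Fin (2 ^ n),
        (E (U k * ρ * (U k)ᴴ)) b b *
          ((O * Minv ((U k)ᴴ * Matrix.single b b 1 * U k)).trace
            - (O * ρ).trace) ^ 2).re
      ≤ shadowNormSq U (⇑E) MinvAdj (O - (O.trace / (2 ^ n : ℂ)) • 1) := by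
  classical
  obtain ⟨hCP, hTP⟩ := hE
  have hpos : IsPositiveMap ⇑E := isPositiveMap_of_CP hCP
  have hconj : ∀ X, E (Xᴴ) = (E X)ᴴ := posmap_conjTranspose hpos
  set O₀ : Matrix (Fin (2 ^ n)) (Fin (2 ^ n)) ℂ := O - (O.trace / (2 ^ n : ℂ)) • 1 with hO₀
  -- linearity of Minv
  have hMeq : shadowChannel U ⇑E = ⇑(shadowLin U E) := rfl
  have hMinj : Function.Injective (shadowChannel U ⇑E) := hMinvL.injective
  have hIadd : ∀ X Y, Minv (X + Y) = Minv X + Minv Y := by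
    intro X Y
    apply hMinj
    rw [hMinvR, hMeq, map_add, ← hMeq, hMinvR, hMinvR]
  have hIsmul : ∀ (c : ℂ) (X), Minv (c • X) = c • Minv X := by
    intro c X
    apply hMinj
    rw [hMinvR, hMeq, _root_.map_smul, ← hMeq, hMinvR]
  let MinvL : Matrix (Fin (2 ^ n)) (Fin (2 ^ n)) ℂ →ₗ[ℂ] Matrix (Fin (2 ^ n)) (Fin (2 ^ n)) ℂ :=
    { toFun := Minv, map_add' := hIadd, map_smul' := hIsmul }
  have hMinvL_eq : Minv = ⇑MinvL := rfl
  -- Hermitian facts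
  have htrO : star O.trace = O.trace := by
    rw [← Matrix.trace_conjTranspose, hO.eq]
  have hO₀h : O₀.IsHermitian := by
    show O₀ᴴ = O₀
    rw [hO₀, Matrix.conjTranspose_sub, Matrix.conjTranspose_smul, hO.eq,
      Matrix.conjTranspose_one]
    congr 2
    rw [star_div₀, htrO]
    norm_num
  have hUU : ∀ k, U k * (U k)ᴴ = 1 := fun k => by
    have := (Matrix.mem_unitaryGroup_iff).1 (hU k)
    rwa [Matrix.star_eq_conjTranspose] at this
  have hU'U : ∀ k, (U k)ᴴ * U k = 1 := fun k => by
    have := (Matrix.mem_unitaryGroup_iff').1 (hU k)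
    rwa [Matrix.star_eq_conjTranspose] at this
  have hBherm : ∀ (k : κ) (b : Fin (2 ^ n)),
      ((U k)ᴴ * Matrix.single b b 1 * U k)ᴴ
        = (U k)ᴴ * Matrix.single b b 1 * U k := fun k b => Bherm _ _
  have hBtr : ∀ (k : κ) (b : Fin (2 ^ n)),
      ((U k)ᴴ * Matrix.single b b 1 * U k).trace = 1 := by
    intro k b
    rw [Matrix.trace_mul_cycle, hUU k, one_mul, Matrix.trace_single_eq_same]
  have hMconj : ∀ X, shadowChannel U ⇑E (Xᴴ) = (shadowChannel U ⇑E X)ᴴ :=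
    shadow_conjT U E hconj
  have hGherm : ∀ (k : κ) (b : Fin (2 ^ n)),
      (Minv ((U k)ᴴ * Matrix.single b b 1 * U k)).IsHermitian := by
    intro k b
    show _ᴴ = _
    apply hMinj
    rw [hMconj, hMinvR, hBherm]
  have hMtr : ∀ A, (shadowChannel U ⇑E A).trace = A.trace := trace_shadowChannel U hU E hTP
  have hGtr : ∀ (k : κ) (b : Fin (2 ^ n)),
      (Minv ((U k)ᴴ * Matrix.single b b 1 * U k)).trace = 1 := by
    intro k b
    rw [← hMtr (Minv _), hMinvR, hBtr]
  -- the real-valued data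
  set pr : κ → Fin (2 ^ n) → ℝ := fun k b => ((E (U k * ρ * (U k)ᴴ)) b b).re with hpr
  set xr : κ → Fin (2 ^ n) → ℝ := fun k b =>
    ((O₀ * Minv ((U k)ᴴ * Matrix.single b b 1 * U k)).trace).re with hxr
  set mr : ℝ := ((O₀ * ρ).trace).re with hmr
  have hPc : ∀ k b, (E (U k * ρ * (U k)ᴴ)) b b = ((pr k b : ℝ) : ℂ) :=
    fun k b => (density_diag_facts U hU E hpos hTP hρ k b).1
  have hXc : ∀ k b, (O₀ * Minv ((U k)ᴴ * Matrix.single b b 1 * U k)).trace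
      = ((xr k b : ℝ) : ℂ) :=
    fun k b => (herm_mul_trace_real hO₀h (hGherm k b)).symm
  have hMc : (O₀ * ρ).trace = ((mr : ℝ) : ℂ) := (herm_mul_trace_real hO₀h hρ.1.1).symm
  -- difference identity
  have e1 : O = O₀ + (O.trace / (2 ^ n : ℂ)) • 1 := by rw [hO₀]; abel
  have hdiff : ∀ k b,
      (O * Minv ((U k)ᴴ * Matrix.single b b 1 * U k)).trace - (O * ρ).trace
        = ((xr k b - mr : ℝ) : ℂ) := by
    intro k b
    have t1 : ((O.trace / (2 ^ n : ℂ)) • (1 : Matrix (Fin (2 ^ n)) (Fin (2 ^ n)) ℂ)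
        * Minv ((U k)ᴴ * Matrix.single b b 1 * U k)).trace = O.trace / (2 ^ n : ℂ) := by
      rw [Matrix.smul_mul, Matrix.one_mul, Matrix.trace_smul, hGtr k b, smul_eq_mul, mul_one]
    have t2 : ((O.trace / (2 ^ n : ℂ)) • (1 : Matrix (Fin (2 ^ n)) (Fin (2 ^ n)) ℂ) * ρ).trace
        = O.trace / (2 ^ n : ℂ) := by
      rw [Matrix.smul_mul, Matrix.one_mul, Matrix.trace_smul, hρ.2, smul_eq_mul, mul_one]
    calc (O * Minv ((U k)ᴴ * Matrix.single b b 1 * U k)).trace - (O * ρ).trace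
        = ((O₀ + (O.trace / (2 ^ n : ℂ)) • 1)
            * Minv ((U k)ᴴ * Matrix.single b b 1 * U k)).trace
          - ((O₀ + (O.trace / (2 ^ n : ℂ)) • 1) * ρ).trace := by rw [← e1]
    _ = ((O₀ * Minv ((U k)ᴴ * Matrix.single b b 1 * U k)).trace
          + O.trace / (2 ^ n : ℂ)) - ((O₀ * ρ).trace + O.trace / (2 ^ n : ℂ)) := by
        rw [Matrix.add_mul, Matrix.add_mul, Matrix.trace_add, Matrix.trace_add, t1, t2]
    _ = ((xr k b : ℝ) : ℂ) - ((mr : ℝ) : ℂ) := by rw [hXc k b, hMc]; ring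
    _ = ((xr k b - mr : ℝ) : ℂ) := by push_cast; ring
  -- the shadow-norm integrand equals xr
  have hxy : ∀ k b, (U k * MinvAdj O₀ * (U k)ᴴ) b b = ((xr k b : ℝ) : ℂ) := by
    intro k b
    have h1 : ((xr k b : ℝ) : ℂ)
        = ((MinvAdj O₀)ᴴ * ((U k)ᴴ * Matrix.single b b 1 * U k)).trace := by
      rw [← hXc k b, ← hAdj O₀ ((U k)ᴴ * Matrix.single b b 1 * U k), hO₀h.eq]
    have h2 : ((MinvAdj O₀)ᴴ * ((U k)ᴴ * Matrix.single b b 1 * U k)).trace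
        = (Matrix.single b b 1 * (U k * (MinvAdj O₀)ᴴ * (U k)ᴴ)).trace := by
      rw [← Matrix.mul_assoc, Matrix.trace_mul_cycle, ← Matrix.mul_assoc,
        Matrix.trace_mul_comm]
    have h3 : (Matrix.single b b 1 * (U k * (MinvAdj O₀)ᴴ * (U k)ᴴ)).trace
        = (U k * (MinvAdj O₀)ᴴ * (U k)ᴴ) b b := trace_stdBasis_mul _ _
    have h5 : (U k * MinvAdj O₀ * (U k)ᴴ)ᴴ = U k * (MinvAdj O₀)ᴴ * (U k)ᴴ := by
      rw [Matrix.conjTranspose_mul, Matrix.conjTranspose_mul,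
        Matrix.conjTranspose_conjTranspose, ← Matrix.mul_assoc]
    have h4 : (U k * (MinvAdj O₀)ᴴ * (U k)ᴴ) b b
        = star ((U k * MinvAdj O₀ * (U k)ᴴ) b b) := by
      rw [← h5, Matrix.conjTranspose_apply]
    have h6 : ((xr k b : ℝ) : ℂ) = star ((U k * MinvAdj O₀ * (U k)ᴴ) b b) := by
      rw [h1, h2, h3, h4]
    calc (U k * MinvAdj O₀ * (U k)ᴴ) b b
        = star (star ((U k * MinvAdj O₀ * (U k)ᴴ) b b)) := (star_star _).symm
    _ = star (((xr k b : ℝ) : ℂ)) := by rw [← h6]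
    _ = ((xr k b : ℝ) : ℂ) := by rw [Complex.star_def, Complex.conj_ofReal]
  -- complex averages
  have hptotC : (Fintype.card κ : ℂ)⁻¹ * ∑ k : κ, ∑ b : Fin (2 ^ n), ((pr k b : ℝ) : ℂ) = 1 := by
    have h1 : ∀ k : κ, (∑ b : Fin (2 ^ n), ((pr k b : ℝ) : ℂ)) = 1 := by
      intro k
      calc (∑ b : Fin (2 ^ n), ((pr k b : ℝ) : ℂ))
          = ∑ b : Fin (2 ^ n), (E (U k * ρ * (U k)ᴴ)) b b :=
            Finset.sum_congr rfl fun b _ => (hPc k b).symm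
      _ = (E (U k * ρ * (U k)ᴴ)).trace := rfl
      _ = 1 := by rw [hTP, Matrix.trace_mul_cycle, hU'U k, one_mul, hρ.2]
    rw [Finset.sum_congr rfl fun k _ => h1 k, Finset.sum_const, Finset.card_univ,
      nsmul_eq_mul, mul_one, inv_mul_cancel₀ (Nat.cast_ne_zero.2 Fintype.card_ne_zero)]
  have hmeanC : (Fintype.card κ : ℂ)⁻¹
      * ∑ k : κ, ∑ b : Fin (2 ^ n), ((pr k b * xr k b : ℝ) : ℂ)
        = ((mr : ℝ) : ℂ) := by
    have h2 : ρ = (Fintype.card κ : ℂ)⁻¹ • ∑ k : κ, ∑ b : Fin (2 ^ n),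
        ((pr k b : ℝ) : ℂ) • Minv ((U k)ᴴ * Matrix.single b b 1 * U k) := by
      conv_lhs => rw [← hMinvL ρ]
      have h1 : shadowChannel U ⇑E ρ = (Fintype.card κ : ℂ)⁻¹ • ∑ k : κ, ∑ b : Fin (2 ^ n),
          ((pr k b : ℝ) : ℂ) • ((U k)ᴴ * Matrix.single b b 1 * U k) := by
        unfold shadowChannel
        congr 1
        exact Finset.sum_congr rfl fun k _ => Finset.sum_congr rfl fun b _ => by rw [hPc k b]
      rw [h1, hMinvL_eq, _root_.map_smul, map_sum]
      simp only [map_sum, _root_.map_smul]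
    symm
    calc ((mr : ℝ) : ℂ) = (O₀ * ρ).trace := hMc.symm
    _ = (Fintype.card κ : ℂ)⁻¹
        * ∑ k : κ, ∑ b : Fin (2 ^ n), ((pr k b * xr k b : ℝ) : ℂ) := by
        conv_lhs => rw [h2]
        rw [Matrix.mul_smul, Matrix.trace_smul, smul_eq_mul]
        congr 1
        rw [Matrix.mul_sum, Matrix.trace_sum]
        refine Finset.sum_congr rfl fun k _ => ?_
        rw [Matrix.mul_sum, Matrix.trace_sum]
        refine Finset.sum_congr rfl fun b _ => ?_
        rw [Matrix.mul_smul, Matrix.trace_smul, smul_eq_mul, hXc k b]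
        push_cast
        ring
  -- real-part evaluation helper
  have hre_eval : ∀ f : κ → Fin (2 ^ n) → ℝ,
      ((Fintype.card κ : ℂ)⁻¹ * ∑ k : κ, ∑ b : Fin (2 ^ n), ((f k b : ℝ) : ℂ)).re
        = (Fintype.card κ : ℝ)⁻¹ * ∑ k : κ, ∑ b : Fin (2 ^ n), f k b := by
    intro f
    have hs : (∑ k : κ, ∑ b : Fin (2 ^ n), ((f k b : ℝ) : ℂ))
        = (((∑ k : κ, ∑ b : Fin (2 ^ n), f k b : ℝ)) : ℂ) := by push_cast; rfl
    have hc : ((Fintype.card κ : ℂ))⁻¹ = (((Fintype.card κ : ℝ)⁻¹ : ℝ) : ℂ) := by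
      push_cast; rfl
    rw [hs, hc, ← Complex.ofReal_mul, Complex.ofReal_re]
  -- real versions
  have hptotR : (Fintype.card κ : ℝ)⁻¹ * ∑ k : κ, ∑ b : Fin (2 ^ n), pr k b = 1 := by
    have h := congrArg Complex.re hptotC
    rw [hre_eval] at h
    simpa using h
  have hmeanR : (Fintype.card κ : ℝ)⁻¹
      * ∑ k : κ, ∑ b : Fin (2 ^ n), pr k b * xr k b = mr := by
    have h := congrArg Complex.re hmeanC
    rw [hre_eval] at h
    simpa using h
  -- rewrite the LHS
  have hLHS : ((Fintype.card κ : ℂ)⁻¹ * ∑ k : κ, ∑ b : Fin (2 ^ n),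
      (E (U k * ρ * (U k)ᴴ)) b b *
        ((O * Minv ((U k)ᴴ * Matrix.single b b 1 * U k)).trace
          - (O * ρ).trace) ^ 2)
      = (Fintype.card κ : ℂ)⁻¹ * ∑ k : κ, ∑ b : Fin (2 ^ n),
          (((pr k b * (xr k b - mr) ^ 2 : ℝ)) : ℂ) := by
    congr 1
    refine Finset.sum_congr rfl fun k _ => Finset.sum_congr rfl fun b _ => ?_
    rw [hPc k b, hdiff k b]
    push_cast
    ring
  rw [hLHS, hre_eval]
  -- the candidate value in the sup set
  have hmem : (Fintype.card κ : ℝ)⁻¹ * ∑ k : κ, ∑ b : Fin (2 ^ n), pr k b * xr k b ^ 2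
      ∈ {x : ℝ | ∃ σ : Matrix (Fin (2 ^ n)) (Fin (2 ^ n)) ℂ, IsDensityMatrix σ ∧
        x = ((Fintype.card κ : ℂ)⁻¹ * ∑ k : κ, ∑ b : Fin (2 ^ n),
          (E (U k * σ * (U k)ᴴ)) b b * ((U k * MinvAdj O₀ * (U k)ᴴ) b b) ^ 2).re} := by
    refine ⟨ρ, hρ, ?_⟩
    have hv : ((Fintype.card κ : ℂ)⁻¹ * ∑ k : κ, ∑ b : Fin (2 ^ n),
        (E (U k * ρ * (U k)ᴴ)) b b * ((U k * MinvAdj O₀ * (U k)ᴴ) b b) ^ 2)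
        = (Fintype.card κ : ℂ)⁻¹ * ∑ k : κ, ∑ b : Fin (2 ^ n),
          (((pr k b * xr k b ^ 2 : ℝ)) : ℂ) := by
      congr 1
      refine Finset.sum_congr rfl fun k _ => Finset.sum_congr rfl fun b _ => ?_
      rw [hPc k b, hxy k b]
      push_cast
      ring
    rw [hv, hre_eval]
  -- boundedness of the sup set
  have hbdd : BddAbove {x : ℝ | ∃ σ : Matrix (Fin (2 ^ n)) (Fin (2 ^ n)) ℂ, IsDensityMatrix σ ∧
      x = ((Fintype.card κ : ℂ)⁻¹ * ∑ k : κ, ∑ b : Fin (2 ^ n),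
        (E (U k * σ * (U k)ᴴ)) b b * ((U k * MinvAdj O₀ * (U k)ᴴ) b b) ^ 2).re} := by
    refine ⟨(Fintype.card κ : ℝ)⁻¹ * ∑ k : κ, ∑ b : Fin (2 ^ n), xr k b ^ 2, ?_⟩
    rintro z ⟨σ, hσ, rfl⟩
    have hQ := fun (k : κ) (b : Fin (2 ^ n)) => density_diag_facts U hU E hpos hTP hσ k b
    have hv : ((Fintype.card κ : ℂ)⁻¹ * ∑ k : κ, ∑ b : Fin (2 ^ n),
        (E (U k * σ * (U k)ᴴ)) b b * ((U k * MinvAdj O₀ * (U k)ᴴ) b b) ^ 2)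
        = (Fintype.card κ : ℂ)⁻¹ * ∑ k : κ, ∑ b : Fin (2 ^ n),
          ((((E (U k * σ * (U k)ᴴ)) b b).re * xr k b ^ 2 : ℝ) : ℂ) := by
      congr 1
      refine Finset.sum_congr rfl fun k _ => Finset.sum_congr rfl fun b _ => ?_
      rw [(hQ k b).1, hxy k b]
      push_cast
      simp only [Complex.ofReal_re]
    rw [hv, hre_eval]
    refine mul_le_mul_of_nonneg_left ?_ (inv_nonneg.2 (Nat.cast_nonneg _))
    refine Finset.sum_le_sum fun k _ => Finset.sum_le_sum fun b _ => ?_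
    have h1 := (hQ k b).2.1
    have h2 := (hQ k b).2.2
    nlinarith [sq_nonneg (xr k b)]
  -- put it together
  calc (Fintype.card κ : ℝ)⁻¹ * ∑ k : κ, ∑ b : Fin (2 ^ n), pr k b * (xr k b - mr) ^ 2
      ≤ (Fintype.card κ : ℝ)⁻¹ * ∑ k : κ, ∑ b : Fin (2 ^ n), pr k b * xr k b ^ 2 :=
        real_var_bound _ pr xr mr hptotR hmeanR
  _ ≤ shadowNormSq U (⇑E) MinvAdj O₀ := le_csSup hbdd hmem

end NoisyShadows
end
end

section
/- Let d₁, d₂ ≥ 1, let 𝒰₁, 𝒰₂ be unitary ensembles on ℂ^{d₁} and ℂ^{d₂} respectively, and let ℰ₁ : M_{d₁} → M_{d₁}, ℰ₂ : M_{d₂} → M_{d₂} be linear maps. Let 𝒰 = 𝒰₁ ⊗ 𝒰₂ be the product ensemble and let ℰ : M_{d₁·d₂} → M_{d₁·d₂} (matrices indexed by pairs) be a linear map satisfying ℰ(A ⊗ B) = ℰ₁(A) ⊗ ℰ₂(B) for all A ∈ M_{d₁}, B ∈ M_{d₂}. Then: (i) M_{𝒰,ℰ}(A ⊗ B) = M_{𝒰₁,ℰ₁}(A)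 ⊗ M_{𝒰₂,ℰ₂}(B) for all A ∈ M_{d₁}, B ∈ M_{d₂}; and (ii) if M_{𝒰₁,ℰ₁} and M_{𝒰₂,ℰ₂} are invertible, then M_{𝒰,ℰ} is invertible and M_{𝒰,ℰ}⁻¹(A ⊗ B) = M_{𝒰₁,ℰ₁}⁻¹(A) ⊗ M_{𝒰₂,ℰ₂}⁻¹(B) for all A, B. -/
open scoped ComplexOrder Kronecker
open Matrix MeasureTheory

noncomputable section

namespace NoisyShadows

section AuxStmt3

open Matrix
open scoped Kronecker

private lemma kron_conjT {ι₁ ι₂ : Type*} [Fintype ι₁] [Fintype ι₂]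
    (A : Matrix ι₁ ι₁ ℂ) (B : Matrix ι₂ ι₂ ℂ) : (A ⊗ₖ B)ᴴ = Aᴴ ⊗ₖ Bᴴ := by
  ext ⟨p,q⟩ ⟨r,s⟩
  simp [conjTranspose_apply, kroneckerMap_apply]

private lemma std_kron {ι₁ ι₂ : Type*} [DecidableEq ι₁] [DecidableEq ι₂]
    (a c : ι₁) (b e : ι₂) :
    Matrix.single (a,b) (c,e) (1:ℂ) = Matrix.single a c 1 ⊗ₖ Matrix.single b e 1 := by
  ext ⟨p,q⟩ ⟨r,s⟩
  simp [Matrix.single, kroneckerMap_apply, Prod.ext_iff]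
  aesop

private lemma sum_kron_sum {α β ι₁ ι₂ : Type*} [Fintype α] [Fintype β]
    (f : α → Matrix ι₁ ι₁ ℂ) (g : β → Matrix ι₂ ι₂ ℂ) :
    ∑ a : α, ∑ b : β, f a ⊗ₖ g b = (∑ a, f a) ⊗ₖ (∑ b, g b) := by
  ext ⟨p,q⟩ ⟨r,s⟩
  simp [Matrix.sum_apply, kroneckerMap_apply, Finset.sum_mul, Finset.mul_sum]
  rw [Finset.sum_comm]

private lemma shadow_linear {κ ι : Type*} [Fintype κ] [Fintype ι] [DecidableEq ι]
    (U : κ → Matrix ι ι ℂ) (E : Matrix ι ι ℂ →ₗ[ℂ] Matrix ι ι ℂ) :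
    IsLinearMap ℂ (shadowChannel U (⇑E)) := by
  constructor
  · intro A B
    unfold shadowChannel
    rw [← smul_add, ← Finset.sum_add_distrib]
    congr 1
    refine Finset.sum_congr rfl fun k _ => ?_
    rw [← Finset.sum_add_distrib]
    refine Finset.sum_congr rfl fun b _ => ?_
    rw [Matrix.mul_add, Matrix.add_mul, map_add, Matrix.add_apply, add_smul]
  · intro c A
    unfold shadowChannel
    rw [smul_comm]
    congr 1
    rw [Finset.smul_sum]
    refine Finset.sum_congr rfl fun k _ => ?_
    rw [Finset.smul_sum]
    refine Finset.sum_congr rfl fun b _ => ?_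
    rw [Matrix.mul_smul, Matrix.smul_mul, E.map_smul, Matrix.smul_apply, smul_eq_mul, ← smul_smul]

end AuxStmt3

/-- the shadow channel of a product ensemble with product noise factorizes on
Kronecker products, and so does its inverse. -/
theorem stmt_3 {d₁ d₂ : ℕ} (hd₁ : 1 ≤ d₁) (hd₂ : 1 ≤ d₂)
    {κ₁ κ₂ : Type*} [Fintype κ₁] [Nonempty κ₁] [Fintype κ₂] [Nonempty κ₂]
    (U₁ : κ₁ → Matrix (Fin d₁) (Fin d₁) ℂ) (hU₁ : IsUnitaryEnsemble U₁)
    (U₂ : κ₂ → Matrix (Fin d₂) (Fin d₂) ℂ) (hU₂ : IsUnitaryEnsemble U₂)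
    (E₁ : Matrix (Fin d₁) (Fin d₁) ℂ →ₗ[ℂ] Matrix (Fin d₁) (Fin d₁) ℂ)
    (E₂ : Matrix (Fin d₂) (Fin d₂) ℂ →ₗ[ℂ] Matrix (Fin d₂) (Fin d₂) ℂ)
    (E : Matrix (Fin d₁ × Fin d₂) (Fin d₁ × Fin d₂) ℂ →ₗ[ℂ]
      Matrix (Fin d₁ × Fin d₂) (Fin d₁ × Fin d₂) ℂ)
    (hE : ∀ (A : Matrix (Fin d₁) (Fin d₁) ℂ) (B : Matrix (Fin d₂) (Fin d₂) ℂ),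
      E (A ⊗ₖ B) = (E₁ A) ⊗ₖ (E₂ B)) :
    (∀ (A : Matrix (Fin d₁) (Fin d₁) ℂ) (B : Matrix (Fin d₂) (Fin d₂) ℂ),
      shadowChannel (fun p : κ₁ × κ₂ => U₁ p.1 ⊗ₖ U₂ p.2) (⇑E) (A ⊗ₖ B)
        = shadowChannel U₁ (⇑E₁) A ⊗ₖ shadowChannel U₂ (⇑E₂) B) ∧
    (Function.Bijective (shadowChannel U₁ (⇑E₁)) →
      Function.Bijective (shadowChannel U₂ (⇑E₂)) →
      Function.Bijective (shadowChannel (fun p : κ₁ × κ₂ => U₁ p.1 ⊗ₖ U₂ p.2) (⇑E)) ∧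
      ∀ (A : Matrix (Fin d₁) (Fin d₁) ℂ) (B : Matrix (Fin d₂) (Fin d₂) ℂ),
        Function.invFun (shadowChannel (fun p : κ₁ × κ₂ => U₁ p.1 ⊗ₖ U₂ p.2) (⇑E)) (A ⊗ₖ B)
          = Function.invFun (shadowChannel U₁ (⇑E₁)) A ⊗ₖ
            Function.invFun (shadowChannel U₂ (⇑E₂)) B) := by
  classical
  have part1 : ∀ (A : Matrix (Fin d₁) (Fin d₁) ℂ) (B : Matrix (Fin d₂) (Fin d₂) ℂ),
      shadowChannel (fun p : κ₁ × κ₂ => U₁ p.1 ⊗ₖ U₂ p.2) (⇑E) (A ⊗ₖ B)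
        = shadowChannel U₁ (⇑E₁) A ⊗ₖ shadowChannel U₂ (⇑E₂) B := by
    intro A B
    unfold shadowChannel
    have key : ∀ (k : κ₁ × κ₂) (b : Fin d₁ × Fin d₂),
        (E ((U₁ k.1 ⊗ₖ U₂ k.2) * (A ⊗ₖ B) * (U₁ k.1 ⊗ₖ U₂ k.2)ᴴ)) b b •
          ((U₁ k.1 ⊗ₖ U₂ k.2)ᴴ * Matrix.single b b 1 * (U₁ k.1 ⊗ₖ U₂ k.2))
        = ((E₁ (U₁ k.1 * A * (U₁ k.1)ᴴ)) b.1 b.1 •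
            ((U₁ k.1)ᴴ * Matrix.single b.1 b.1 1 * U₁ k.1)) ⊗ₖ
          ((E₂ (U₂ k.2 * B * (U₂ k.2)ᴴ)) b.2 b.2 •
            ((U₂ k.2)ᴴ * Matrix.single b.2 b.2 1 * U₂ k.2)) := by
      rintro ⟨k₁, k₂⟩ ⟨b₁, b₂⟩
      rw [kron_conjT, ← Matrix.mul_kronecker_mul, ← Matrix.mul_kronecker_mul, hE,
        std_kron, ← Matrix.mul_kronecker_mul, ← Matrix.mul_kronecker_mul,
        Matrix.smul_kronecker, Matrix.kronecker_smul, Matrix.kroneckerMap_apply, ← smul_smul]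
    simp only [key]
    simp only [Fintype.sum_prod_type]
    simp_rw [sum_kron_sum]
    rw [Matrix.smul_kronecker, Matrix.kronecker_smul, Fintype.card_prod, Nat.cast_mul,
      mul_inv, ← smul_smul]
  refine ⟨part1, fun h1 h2 => ?_⟩
  have hlin := shadow_linear (fun p : κ₁ × κ₂ => U₁ p.1 ⊗ₖ U₂ p.2) E
  let ML : Matrix (Fin d₁ × Fin d₂) (Fin d₁ × Fin d₂) ℂ →ₗ[ℂ]
      Matrix (Fin d₁ × Fin d₂) (Fin d₁ × Fin d₂) ℂ :=
    IsLinearMap.mk' (shadowChannel (fun p : κ₁ × κ₂ => U₁ p.1 ⊗ₖ U₂ p.2) (⇑E)) hlin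
  have hMLapp : ∀ x, ML x = shadowChannel (fun p : κ₁ × κ₂ => U₁ p.1 ⊗ₖ U₂ p.2) (⇑E) x :=
    fun _ => rfl
  have hstd : ∀ p q : Fin d₁ × Fin d₂,
      Matrix.single p q (1:ℂ) ∈ LinearMap.range ML := by
    rintro ⟨a, b⟩ ⟨c, e⟩
    obtain ⟨X, hX⟩ := h1.2 (Matrix.single a c 1)
    obtain ⟨Y, hY⟩ := h2.2 (Matrix.single b e 1)
    refine ⟨X ⊗ₖ Y, ?_⟩
    rw [hMLapp, part1 X Y, hX, hY, std_kron]
  have hsurj : Function.Surjective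
      (shadowChannel (fun p : κ₁ × κ₂ => U₁ p.1 ⊗ₖ U₂ p.2) (⇑E)) := by
    intro C
    have hC : C ∈ LinearMap.range ML := by
      rw [Matrix.matrix_eq_sum_single C]
      refine Submodule.sum_mem _ fun i _ => Submodule.sum_mem _ fun j _ => ?_
      have : Matrix.single i j (C i j) = C i j • Matrix.single i j 1 := by
        rw [Matrix.smul_single, smul_eq_mul, mul_one]
      rw [this]
      exact Submodule.smul_mem _ _ (hstd i j)
    obtain ⟨X, hX⟩ := hC
    exact ⟨X, by rw [← hMLapp]; exact hX⟩
  have hinj : Function.Injective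
      (shadowChannel (fun p : κ₁ × κ₂ => U₁ p.1 ⊗ₖ U₂ p.2) (⇑E)) := by
    have hs : Function.Surjective ML := by
      intro C
      obtain ⟨X, hX⟩ := hsurj C
      exact ⟨X, by rw [hMLapp]; exact hX⟩
    have hi : Function.Injective ML := (LinearMap.injective_iff_surjective).2 hs
    intro x y h
    exact hi (by rw [hMLapp, hMLapp]; exact h)
  refine ⟨⟨hinj, hsurj⟩, fun A B => ?_⟩
  apply hinj
  rw [Function.invFun_eq (hsurj (A ⊗ₖ B)), part1,
    Function.invFun_eq (h1.2 A), Function.invFun_eq (h2.2 B)]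


end NoisyShadows
end
end

section
/- Let n ≥ 1, let 𝒰₁,…,𝒰ₙ be unitary ensembles on ℂ² each of which is a unitary 3-design, let 𝒰 = 𝒰₁⊗⋯⊗𝒰ₙ be the product ensemble on ℂ^{2ⁿ}, and let ℰ₁ : M₂ → M₂ be a trace-preserving linear map. Let p ∈ {0,1,2,3}ⁿ, let P_p be the corresponding Pauli operator, and let w = wt(p). Then for every A ∈ M_{2ⁿ}: E_{U∼𝒰} Σ_{b∈{0,1}ⁿ} ⟨b| ℰ₁^{⊗n}(U A U†) |b⟩ · ⟨b| U P_p U† |b⟩² = 3^{−w} · tr(A). -/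
open scoped ComplexOrder Kronecker
open Matrix MeasureTheory

noncomputable section

namespace NoisyShadows

/-- The Pauli matrices `σ₀ = I, σ₁ = X, σ₂ = Y, σ₃ = Z`. -/
def pauli : Fin 4 → Matrix (Fin 2) (Fin 2) ℂ :=
  ![1, !![0, 1; 1, 0], !![0, -Complex.I; Complex.I, 0], !![1, 0; 0, -1]]


/-! ### Auxiliary development -/

section Aux

lemma I2aux : (Complex.I)^2 = -1 := Complex.I_sq
lemma I3aux : (Complex.I)^3 = -Complex.I := by rw [pow_succ, I2aux]; ring
lemma I4aux : (Complex.I)^4 = 1 := by rw [pow_succ, I3aux]; simp [Complex.I_mul_I]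

/-- Generic Kronecker-type product of a family of square matrices. -/
def mprod {τ ι : Type*} [Fintype τ] (M : τ → Matrix ι ι ℂ) : Matrix (τ → ι) (τ → ι) ℂ :=
  Matrix.of fun x y => ∏ j, M j (x j) (y j)

lemma mprod_apply {τ ι : Type*} [Fintype τ] (M : τ → Matrix ι ι ℂ) (x y : τ → ι) :
    mprod M x y = ∏ j, M j (x j) (y j) := rfl

lemma sum_pi_prod {n : ℕ} {κ : Fin n → Type*} [∀ i, Fintype (κ i)] (f : ∀ i, κ i → ℂ) :
    ∑ v : ∀ i, κ i, ∏ i, f i (v i) = ∏ i, ∑ k, f i k := by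
  calc ∑ v : ∀ i, κ i, ∏ i, f i (v i)
      = ∑ v ∈ Fintype.piFinset (fun _ => Finset.univ), ∏ i, f i (v i) := by
        rw [Fintype.piFinset_univ]
    _ = ∏ i, ∑ k, f i k := (Finset.prod_univ_sum (fun _ => Finset.univ) f).symm

set_option maxHeartbeats 2000000 in
lemma mprod_mul {τ ι : Type*} [Fintype τ] [DecidableEq τ] [Fintype ι]
    (M N : τ → Matrix ι ι ℂ) :
    mprod M * mprod N = mprod (fun j => M j * N j) := by
  ext x y
  simp only [mprod, Matrix.mul_apply, Matrix.of_apply]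
  calc ∑ w : τ → ι, (∏ j, M j (x j) (w j)) * ∏ j, N j (w j) (y j)
      = ∑ w : τ → ι, ∏ j, (M j (x j) (w j) * N j (w j) (y j)) :=
        Finset.sum_congr rfl fun w _ => (Finset.prod_mul_distrib).symm
    _ = ∑ w ∈ Fintype.piFinset (fun _ => Finset.univ),
          ∏ j, (M j (x j) (w j) * N j (w j) (y j)) := by rw [Fintype.piFinset_univ]
    _ = ∏ j, ∑ c : ι, M j (x j) c * N j c (y j) :=
        (Finset.prod_univ_sum (fun _ => Finset.univ)
          (fun j c => M j (x j) c * N j c (y j))).symm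

lemma mprod_conjTranspose {τ ι : Type*} [Fintype τ] (M : τ → Matrix ι ι ℂ) :
    (mprod M)ᴴ = mprod (fun j => (M j)ᴴ) := by
  ext x y
  simp only [mprod, Matrix.conjTranspose_apply, Matrix.of_apply, star_prod]

lemma pauli_trace' {q : Fin 4} (hq : q ≠ 0) : (pauli q).trace = 0 := by
  fin_cases q
  · simp at hq
  all_goals simp [pauli, Matrix.trace_fin_two]

lemma pauli_mul_self (q : Fin 4) : pauli q * pauli q = 1 := by
  fin_cases q <;>
    · simp only [pauli, Matrix.cons_val_zero, Matrix.cons_val_one, Matrix.head_cons,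
        Matrix.cons_val_two, Matrix.tail_cons, Matrix.cons_val_three]
      first
      | exact one_mul 1
      | (ext i j; fin_cases i <;> fin_cases j <;>
          simp [Matrix.mul_apply, Fin.sum_univ_two, Complex.I_mul_I, Matrix.one_apply])

lemma pauli_abs_le (q : Fin 4) (j k : Fin 2) : ‖pauli q j k‖ ≤ 1 := by
  fin_cases q <;> fin_cases j <;> fin_cases k <;>
    simp [pauli, Matrix.one_apply]

/-- The unitary rotating the `Z` axis to the `X` axis. -/
def W1mat : Matrix (Fin 2) (Fin 2) ℂ :=
  !![(1+Complex.I)/2, (1+Complex.I)/2; (1+Complex.I)/2, -((1+Complex.I)/2)]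

/-- The unitary rotating the `Z` axis to the `Y` axis. -/
def W2mat : Matrix (Fin 2) (Fin 2) ℂ :=
  !![(1+Complex.I)/2, (1-Complex.I)/2; (1-Complex.I)/2, (1+Complex.I)/2]

lemma W1_mem : W1mat ∈ Matrix.unitaryGroup (Fin 2) ℂ := by
  rw [Matrix.mem_unitaryGroup_iff, Matrix.star_eq_conjTranspose]
  ext i j
  fin_cases i <;> fin_cases j <;>
    · simp only [W1mat, Matrix.mul_apply, Fin.sum_univ_two, Matrix.conjTranspose_apply,
        Matrix.cons_val_zero, Matrix.cons_val_one, Matrix.head_cons, Matrix.head_fin_const,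
        Matrix.cons_val', Matrix.of_apply, Matrix.empty_val', Matrix.cons_val_fin_one,
        Matrix.one_apply, Complex.star_def, map_div₀, map_add, map_sub, map_neg, _root_.map_one,
        map_ofNat, Complex.conj_I, Fin.zero_eta, Fin.mk_one]
      norm_num
      try (ring_nf; simp only [I2aux, I3aux, I4aux]; norm_num)

lemma W2_mem : W2mat ∈ Matrix.unitaryGroup (Fin 2) ℂ := by
  rw [Matrix.mem_unitaryGroup_iff, Matrix.star_eq_conjTranspose]
  ext i j
  fin_cases i <;> fin_cases j <;>
    · simp only [W2mat, Matrix.mul_apply, Fin.sum_univ_two, Matrix.conjTranspose_apply,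
        Matrix.cons_val_zero, Matrix.cons_val_one, Matrix.head_cons, Matrix.head_fin_const,
        Matrix.cons_val', Matrix.of_apply, Matrix.empty_val', Matrix.cons_val_fin_one,
        Matrix.one_apply, Complex.star_def, map_div₀, map_add, map_sub, map_neg, _root_.map_one,
        map_ofNat, Complex.conj_I, Fin.zero_eta, Fin.mk_one]
      norm_num
      try (ring_nf; simp only [I2aux, I3aux, I4aux]; norm_num)

lemma three_squares (M : Matrix (Fin 2) (Fin 2) ℂ) (h0 : M.trace = 0) (h1 : M * M = 1) :
    (M 0 0)^2 + ((W1mat * M * W1matᴴ) 0 0)^2 + ((W2mat * M * W2matᴴ) 0 0)^2 = 1 := by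
  rw [Matrix.trace_fin_two] at h0
  have hd : M 0 0 * M 0 0 + M 0 1 * M 1 0 = 1 := by
    have := congrFun (congrFun h1 0) 0
    simpa [Matrix.mul_apply, Fin.sum_univ_two, Matrix.one_apply] using this
  have hM : M = !![M 0 0, M 0 1; M 1 0, -(M 0 0)] := by
    have h11 : M 1 1 = -(M 0 0) := by linear_combination h0
    rw [← h11]; exact Matrix.eta_fin_two M
  rw [hM]
  simp only [W1mat, W2mat, Matrix.mul_apply, Fin.sum_univ_two, Matrix.conjTranspose_apply,
    Matrix.cons_val_zero, Matrix.cons_val_one, Matrix.head_cons, Matrix.head_fin_const,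
    Matrix.cons_val', Matrix.of_apply, Matrix.empty_val', Matrix.cons_val_fin_one,
    Complex.star_def, map_div₀, map_add, map_sub, map_neg, _root_.map_one, map_ofNat,
    Complex.conj_I]
  ring_nf
  simp only [I2aux, I3aux, I4aux]
  ring_nf
  linear_combination hd

lemma unitary_entry_le {V : Matrix (Fin 2) (Fin 2) ℂ} (hV : V * Vᴴ = 1) (j : Fin 2) :
    ‖V 0 j‖ ≤ 1 := by
  have h := congrFun (congrFun hV 0) 0
  simp [Matrix.mul_apply, Fin.sum_univ_two, Matrix.conjTranspose_apply, Complex.mul_conj,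
    Matrix.one_apply] at h
  have hR : Complex.normSq (V 0 0) + Complex.normSq (V 0 1) = 1 := by exact_mod_cast h
  rw [← Complex.sq_norm, ← Complex.sq_norm] at hR
  have hj : ‖V 0 j‖ ^ 2 ≤ 1 := by
    fin_cases j <;> simp only [Fin.zero_eta, Fin.mk_one] <;>
      nlinarith [norm_nonneg (V 0 0), norm_nonneg (V 0 1)]
  nlinarith [norm_nonneg (V 0 j)]

instance : BorelSpace (Matrix.unitaryGroup (Fin 2) ℂ) := ⟨rfl⟩

lemma haar_int (μ : Measure (Matrix.unitaryGroup (Fin 2) ℂ)) [μ.IsHaarMeasure]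
    [IsProbabilityMeasure μ]
    (P : Matrix (Fin 2) (Fin 2) ℂ) (hP0 : P.trace = 0) (hP1 : P * P = 1)
    (hPb : ∀ j k, ‖P j k‖ ≤ 1) :
    ∫ V : Matrix.unitaryGroup (Fin 2) ℂ,
      (((V : Matrix (Fin 2) (Fin 2) ℂ) * P * (V : Matrix (Fin 2) (Fin 2) ℂ)ᴴ) 0 0)^2 ∂μ
      = 1/3 := by
  set g : Matrix.unitaryGroup (Fin 2) ℂ → ℂ := fun V =>
    (((V : Matrix (Fin 2) (Fin 2) ℂ) * P * (V : Matrix (Fin 2) (Fin 2) ℂ)ᴴ) 0 0)^2 with hg_def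
  have hVu : ∀ V : Matrix.unitaryGroup (Fin 2) ℂ,
      (V : Matrix (Fin 2) (Fin 2) ℂ) * (V : Matrix (Fin 2) (Fin 2) ℂ)ᴴ = 1 :=
    fun V => by
      have := V.2
      rw [Matrix.mem_unitaryGroup_iff, Matrix.star_eq_conjTranspose] at this
      exact this
  have hVu' : ∀ V : Matrix.unitaryGroup (Fin 2) ℂ,
      (V : Matrix (Fin 2) (Fin 2) ℂ)ᴴ * (V : Matrix (Fin 2) (Fin 2) ℂ) = 1 :=
    fun V => by
      have := V.2
      rw [Matrix.mem_unitaryGroup_iff', Matrix.star_eq_conjTranspose] at this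
      exact this
  have hcont : Continuous g := by
    have h : Continuous (fun V : Matrix.unitaryGroup (Fin 2) ℂ =>
      (V : Matrix (Fin 2) (Fin 2) ℂ)) := continuous_subtype_val
    have h2 : Continuous (fun V : Matrix.unitaryGroup (Fin 2) ℂ =>
        ((V : Matrix (Fin 2) (Fin 2) ℂ) * P * (V : Matrix (Fin 2) (Fin 2) ℂ)ᴴ)) :=
      (h.matrix_mul continuous_const).matrix_mul h.matrix_conjTranspose
    exact ((continuous_apply _).comp ((continuous_apply _).comp h2)).pow 2
  have hint : Integrable g μ := by
    refine Integrable.mono' (integrable_const (16 : ℝ)) hcont.aestronglyMeasurable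
      (Filter.Eventually.of_forall fun V => ?_)
    have hb : ∀ j k : Fin 2, ‖(V : Matrix (Fin 2) (Fin 2) ℂ) 0 j * P j k *
        (starRingEnd ℂ) ((V : Matrix (Fin 2) (Fin 2) ℂ) 0 k)‖ ≤ 1 := by
      intro j k
      rw [norm_mul, norm_mul, Complex.norm_conj]
      have h1 := unitary_entry_le (hVu V) j
      have h2 := unitary_entry_le (hVu V) k
      have h3 := hPb j k
      have h4 : ‖(V : Matrix (Fin 2) (Fin 2) ℂ) 0 j‖ * ‖P j k‖ ≤ 1 :=
        mul_le_one₀ h1 (norm_nonneg _) h3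
      exact mul_le_one₀ h4 (norm_nonneg _) h2
    have hM : ‖((V : Matrix (Fin 2) (Fin 2) ℂ) * P *
        (V : Matrix (Fin 2) (Fin 2) ℂ)ᴴ) 0 0‖ ≤ 4 := by
      have : (((V : Matrix (Fin 2) (Fin 2) ℂ) * P * (V : Matrix (Fin 2) (Fin 2) ℂ)ᴴ) 0 0)
          = ∑ j : Fin 2, ∑ k : Fin 2, (V : Matrix (Fin 2) (Fin 2) ℂ) 0 j * P j k *
            (starRingEnd ℂ) ((V : Matrix (Fin 2) (Fin 2) ℂ) 0 k) := by
        simp only [Matrix.mul_apply, Matrix.conjTranspose_apply, Fin.sum_univ_two,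
          Complex.star_def, Finset.sum_mul, Finset.mul_sum]
        ring
      rw [this]
      calc ‖_‖ ≤ ∑ j : Fin 2, ∑ k : Fin 2,
            ‖(V : Matrix (Fin 2) (Fin 2) ℂ) 0 j * P j k *
              (starRingEnd ℂ) ((V : Matrix (Fin 2) (Fin 2) ℂ) 0 k)‖ := by
            refine (norm_sum_le _ _).trans ?_
            exact Finset.sum_le_sum fun j _ => norm_sum_le _ _
        _ ≤ 4 := by
            rw [Fin.sum_univ_two, Fin.sum_univ_two, Fin.sum_univ_two]
            linarith [hb 0 0, hb 0 1, hb 1 0, hb 1 1]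
    simp only [hg_def, norm_pow]
    nlinarith [norm_nonneg (((V : Matrix (Fin 2) (Fin 2) ℂ) * P *
      (V : Matrix (Fin 2) (Fin 2) ℂ)ᴴ) 0 0)]
  set w1 : Matrix.unitaryGroup (Fin 2) ℂ := ⟨W1mat, W1_mem⟩
  set w2 : Matrix.unitaryGroup (Fin 2) ℂ := ⟨W2mat, W2_mem⟩
  have hinv1 : ∫ V, g (w1 * V) ∂μ = ∫ V, g V ∂μ := integral_mul_left_eq_self g w1
  have hinv2 : ∫ V, g (w2 * V) ∂μ = ∫ V, g V ∂μ := integral_mul_left_eq_self g w2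
  have hint1 : Integrable (fun V => g (w1 * V)) μ := by
    have := ((measurePreserving_mul_left μ w1).integrable_comp
      hcont.aestronglyMeasurable).mpr hint
    exact this
  have hint2 : Integrable (fun V => g (w2 * V)) μ := by
    have := ((measurePreserving_mul_left μ w2).integrable_comp
      hcont.aestronglyMeasurable).mpr hint
    exact this
  have hsum : ∫ V, (g V + g (w1 * V) + g (w2 * V)) ∂μ = 3 * ∫ V, g V ∂μ := by
    have e1 : ∫ V, (g V + g (w1 * V) + g (w2 * V)) ∂μ
        = ∫ V, (g V + g (w1 * V)) ∂μ + ∫ V, g (w2 * V) ∂μ :=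
      integral_add (hint.add hint1) hint2
    have e2 : ∫ V, (g V + g (w1 * V)) ∂μ = ∫ V, g V ∂μ + ∫ V, g (w1 * V) ∂μ :=
      integral_add hint hint1
    rw [e1, e2, hinv1, hinv2]
    ring
  have hone : ∫ V, (g V + g (w1 * V) + g (w2 * V)) ∂μ = 1 := by
    have hpt : ∀ V : Matrix.unitaryGroup (Fin 2) ℂ, g V + g (w1 * V) + g (w2 * V) = 1 := by
      intro V
      set M : Matrix (Fin 2) (Fin 2) ℂ :=
        (V : Matrix (Fin 2) (Fin 2) ℂ) * P * (V : Matrix (Fin 2) (Fin 2) ℂ)ᴴ with hM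
      have hM0 : M.trace = 0 := by
        rw [hM, Matrix.trace_mul_cycle, hVu' V, Matrix.one_mul, hP0]
      have hM1 : M * M = 1 := by
        rw [hM]
        calc (V : Matrix (Fin 2) (Fin 2) ℂ) * P * (V : Matrix (Fin 2) (Fin 2) ℂ)ᴴ *
              ((V : Matrix (Fin 2) (Fin 2) ℂ) * P * (V : Matrix (Fin 2) (Fin 2) ℂ)ᴴ)
            = (V : Matrix (Fin 2) (Fin 2) ℂ) * P *
                ((V : Matrix (Fin 2) (Fin 2) ℂ)ᴴ * (V : Matrix (Fin 2) (Fin 2) ℂ)) * P *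
                (V : Matrix (Fin 2) (Fin 2) ℂ)ᴴ := by
              simp only [Matrix.mul_assoc]
          _ = 1 := by
              rw [hVu' V, Matrix.mul_one, Matrix.mul_assoc _ P P, hP1, Matrix.mul_one, hVu V]
      have hco : ∀ (W : Matrix (Fin 2) (Fin 2) ℂ)
          (hW : W ∈ Matrix.unitaryGroup (Fin 2) ℂ),
          g ((⟨W, hW⟩ : Matrix.unitaryGroup (Fin 2) ℂ) * V) = ((W * M * Wᴴ) 0 0)^2 := by
        intro W hW
        simp only [hg_def, Submonoid.coe_mul, hM]
        congr 2
        simp only [Matrix.conjTranspose_mul, Matrix.mul_assoc]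
      have h1 := hco W1mat W1_mem
      have h2 := hco W2mat W2_mem
      have h0 : g V = (M 0 0)^2 := by rw [hg_def, hM]
      rw [h0, h1, h2]
      exact three_squares M hM0 hM1
    rw [integral_congr_ae (Filter.Eventually.of_forall fun V => hpt V)]
    simp
  have h3J := hsum.symm.trans hone
  linear_combination (1/3 : ℂ) * h3J

lemma moment {κ : Type*} [Fintype κ] [Nonempty κ] (U : κ → Matrix (Fin 2) (Fin 2) ℂ)
    (hU : IsUnitaryEnsemble U) (hdes : IsUnitaryDesign U 3) {q : Fin 4} (hq : q ≠ 0) :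
    (Fintype.card κ : ℂ)⁻¹ * ∑ k, ((U k * pauli q * (U k)ᴴ) 0 0)^2 = 1/3 := by
  obtain ⟨μ, hHaar, hProb, hmom⟩ := hdes
  haveI := hHaar; haveI := hProb
  have key : ∀ V : Matrix (Fin 2) (Fin 2) ℂ, V * Vᴴ = 1 →
      (kpow 3 V * mprod ![pauli q, pauli q, 1] * (kpow 3 V)ᴴ) (fun _ => 0) (fun _ => 0)
        = ((V * pauli q * Vᴴ) 0 0)^2 := by
    intro V hV
    have h1 : kpow 3 V = mprod (fun _ => V) := rfl
    rw [h1, mprod_conjTranspose, mprod_mul, mprod_mul, mprod_apply, Fin.prod_univ_three]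
    simp only [Matrix.cons_val_zero, Matrix.cons_val_one, Matrix.head_cons,
      Matrix.cons_val_two, Matrix.tail_cons]
    rw [Matrix.mul_one, hV, Matrix.one_apply_eq]
    ring
  calc (Fintype.card κ : ℂ)⁻¹ * ∑ k, ((U k * pauli q * (U k)ᴴ) 0 0)^2
      = (Fintype.card κ : ℂ)⁻¹ * ∑ k, (kpow 3 (U k) * mprod ![pauli q, pauli q, 1] *
          (kpow 3 (U k))ᴴ) (fun _ => 0) (fun _ => 0) := by
        congr 1
        refine Finset.sum_congr rfl fun k _ => ?_
        refine (key (U k) ?_).symm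
        have := hU k
        rw [Matrix.mem_unitaryGroup_iff, Matrix.star_eq_conjTranspose] at this
        exact this
    _ = ∫ V : Matrix.unitaryGroup (Fin 2) ℂ,
          (kpow 3 (V : Matrix (Fin 2) (Fin 2) ℂ) * mprod ![pauli q, pauli q, 1] *
            (kpow 3 (V : Matrix (Fin 2) (Fin 2) ℂ))ᴴ) (fun _ => 0) (fun _ => 0) ∂μ :=
        hmom _ _ _
    _ = ∫ V : Matrix.unitaryGroup (Fin 2) ℂ,
          (((V : Matrix (Fin 2) (Fin 2) ℂ) * pauli q *
            (V : Matrix (Fin 2) (Fin 2) ℂ)ᴴ) 0 0)^2 ∂μ := by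
        refine integral_congr_ae (Filter.Eventually.of_forall fun V => ?_)
        refine key _ ?_
        have := V.2
        rw [Matrix.mem_unitaryGroup_iff, Matrix.star_eq_conjTranspose] at this
        exact this
    _ = 1/3 := haar_int μ _ (pauli_trace' hq) (pauli_mul_self q) (pauli_abs_le q)

lemma single {κ : Type*} [Fintype κ] [Nonempty κ] (U : κ → Matrix (Fin 2) (Fin 2) ℂ)
    (hU : IsUnitaryEnsemble U) (hdes : IsUnitaryDesign U 3)
    (E₁ : Matrix (Fin 2) (Fin 2) ℂ →ₗ[ℂ] Matrix (Fin 2) (Fin 2) ℂ)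
    (htp : IsTracePreserving (⇑E₁)) (q : Fin 4) (B : Matrix (Fin 2) (Fin 2) ℂ) :
    (Fintype.card κ : ℂ)⁻¹ * ∑ k, ∑ c : Fin 2,
      (E₁ (U k * B * (U k)ᴴ)) c c * ((U k * pauli q * (U k)ᴴ) c c)^2
      = (if q = 0 then 1 else (3:ℂ)⁻¹) * B.trace := by
  have hu1 : ∀ k, U k * (U k)ᴴ = 1 := fun k => by
    have := hU k
    rw [Matrix.mem_unitaryGroup_iff, Matrix.star_eq_conjTranspose] at this
    exact this
  have hu2 : ∀ k, (U k)ᴴ * U k = 1 := fun k => by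
    have := hU k
    rw [Matrix.mem_unitaryGroup_iff', Matrix.star_eq_conjTranspose] at this
    exact this
  have htr : ∀ k, (E₁ (U k * B * (U k)ᴴ)).trace = B.trace := fun k => by
    rw [htp, Matrix.trace_mul_cycle, hu2, Matrix.one_mul]
  have hcard : (Fintype.card κ : ℂ) ≠ 0 := by
    exact_mod_cast Fintype.card_ne_zero
  by_cases hq : q = 0
  · subst hq
    simp only [if_pos rfl, one_mul]
    have hinner : ∀ k, ∑ c : Fin 2,
        (E₁ (U k * B * (U k)ᴴ)) c c * ((U k * pauli 0 * (U k)ᴴ) c c)^2 = B.trace := by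
      intro k
      have hid : U k * pauli 0 * (U k)ᴴ = 1 := by
        show U k * 1 * (U k)ᴴ = 1
        rw [Matrix.mul_one, hu1]
      rw [hid]
      simp only [Matrix.one_apply_eq, one_pow, mul_one]
      rw [Fin.sum_univ_two, ← Matrix.trace_fin_two]
      exact htr k
    rw [Finset.sum_congr rfl fun k _ => hinner k, Finset.sum_const, Finset.card_univ,
      nsmul_eq_mul]
    field_simp
    simp
  · simp only [if_neg hq]
    have hinner : ∀ k, ∑ c : Fin 2,
        (E₁ (U k * B * (U k)ᴴ)) c c * ((U k * pauli q * (U k)ᴴ) c c)^2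
          = ((U k * pauli q * (U k)ᴴ) 0 0)^2 * B.trace := by
      intro k
      have hM0 : (U k * pauli q * (U k)ᴴ).trace = 0 := by
        rw [Matrix.trace_mul_cycle, hu2, Matrix.one_mul, pauli_trace' hq]
      rw [Matrix.trace_fin_two] at hM0
      have h11 : (U k * pauli q * (U k)ᴴ) 1 1 = -((U k * pauli q * (U k)ᴴ) 0 0) := by
        linear_combination hM0
      have hE : (E₁ (U k * B * (U k)ᴴ)) 0 0 + (E₁ (U k * B * (U k)ᴴ)) 1 1 = B.trace := by
        rw [← Matrix.trace_fin_two]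
        exact htr k
      rw [Fin.sum_univ_two, h11]
      ring_nf
      linear_combination ((U k * pauli q * (U k)ᴴ) 0 0)^2 * hE
    rw [Finset.sum_congr rfl fun k _ => hinner k, ← Finset.sum_mul, ← mul_assoc, mul_assoc,
      ← mul_assoc]
    rw [show (Fintype.card κ : ℂ)⁻¹ * (∑ k, ((U k * pauli q * (U k)ᴴ) 0 0)^2) = 1/3 from
      moment U hU hdes hq]
    norm_num

lemma kprod_std {n : ℕ} (x y : Fin n → Fin 2) :
    kprod (fun i => Matrix.single (x i) (y i) (1:ℂ)) = Matrix.single x y 1 := by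
  ext u v
  simp only [kprod, Matrix.of_apply, Matrix.single]
  rw [Fintype.prod_boole]
  by_cases h : x = u ∧ y = v
  · obtain ⟨rfl, rfl⟩ := h
    simp
  · have hne : ¬ ∀ i, x i = u i ∧ y i = v i := by
      intro hall
      exact h ⟨funext fun i => (hall i).1, funext fun i => (hall i).2⟩
    simp [h, hne]

lemma kprod_apply {n : ℕ} (C : Fin n → Matrix (Fin 2) (Fin 2) ℂ) (b b' : Fin n → Fin 2) :
    kprod C b b' = ∏ i, C i (b i) (b' i) := rfl

lemma trace_std_ite (a b : Fin 2) :
    (Matrix.single a b (1:ℂ)).trace = if a = b then 1 else 0 := by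
  by_cases h : a = b
  · subst h; simp
  · simp [Matrix.trace_single_eq_of_ne _ _ _ h, h]

end Aux

/-- third-moment Pauli identity for a product of single-qubit 3-designs with
i.i.d. trace-preserving noise. -/
theorem stmt_15 {n : ℕ} (hn : 1 ≤ n) {κ : Fin n → Type*}
    [∀ i, Fintype (κ i)] [∀ i, Nonempty (κ i)]
    (U : ∀ i, κ i → Matrix (Fin 2) (Fin 2) ℂ)
    (hU : ∀ i, IsUnitaryEnsemble (U i)) (hdes : ∀ i, IsUnitaryDesign (U i) 3)
    (E₁ : Matrix (Fin 2) (Fin 2) ℂ →ₗ[ℂ] Matrix (Fin 2) (Fin 2) ℂ)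
    (htp : IsTracePreserving (⇑E₁))
    (En : Matrix (Fin n → Fin 2) (Fin n → Fin 2) ℂ →ₗ[ℂ]
      Matrix (Fin n → Fin 2) (Fin n → Fin 2) ℂ)
    (hEn : ∀ A : Fin n → Matrix (Fin 2) (Fin 2) ℂ,
      En (kprod A) = kprod fun i => E₁ (A i))
    (p : Fin n → Fin 4) (A : Matrix (Fin n → Fin 2) (Fin n → Fin 2) ℂ) :
    (Fintype.card (∀ i, κ i) : ℂ)⁻¹ * ∑ v : ∀ i, κ i, ∑ b : Fin n → Fin 2,
        (En ((kprod fun i => U i (v i)) * A * (kprod fun i => U i (v i))ᴴ)) b b *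
          (((kprod fun i => U i (v i)) * kprod (fun i => pauli (p i)) *
            (kprod fun i => U i (v i))ᴴ) b b) ^ 2
      = ((3 : ℂ) ^ (Finset.univ.filter fun i => p i ≠ 0).card)⁻¹ * A.trace := by
  classical
  let F : Matrix (Fin n → Fin 2) (Fin n → Fin 2) ℂ →ₗ[ℂ] ℂ :=
    { toFun := fun M => (Fintype.card (∀ i, κ i) : ℂ)⁻¹ * ∑ v : ∀ i, κ i, ∑ b : Fin n → Fin 2,
        (En ((kprod fun i => U i (v i)) * M * (kprod fun i => U i (v i))ᴴ)) b b *
          (((kprod fun i => U i (v i)) * kprod (fun i => pauli (p i)) *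
            (kprod fun i => U i (v i))ᴴ) b b) ^ 2
      map_add' := by
        intro M N
        simp only [Matrix.mul_add, Matrix.add_mul, map_add, Matrix.add_apply, add_mul,
          Finset.sum_add_distrib, mul_add]
      map_smul' := by
        intro c M
        simp only [Matrix.mul_smul, Matrix.smul_mul, _root_.map_smul, Matrix.smul_apply,
          smul_eq_mul, RingHom.id_apply, mul_assoc, ← Finset.mul_sum]
        ring }
  show F A = _
  have hkey : ∀ B : Fin n → Matrix (Fin 2) (Fin 2) ℂ,
      F (kprod B) = (∏ i, (if p i = 0 then (1:ℂ) else 3⁻¹)) * ∏ i, (B i).trace := by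
    intro B
    have h1 : ∀ v : ∀ i, κ i, (kprod fun i => U i (v i)) * kprod B *
        (kprod fun i => U i (v i))ᴴ = kprod (fun i => U i (v i) * B i * (U i (v i))ᴴ) := by
      intro v
      show mprod _ * mprod _ * (mprod _)ᴴ = mprod _
      rw [mprod_conjTranspose, mprod_mul, mprod_mul]
    have h2 : ∀ v : ∀ i, κ i, (kprod fun i => U i (v i)) * kprod (fun i => pauli (p i)) *
        (kprod fun i => U i (v i))ᴴ
          = kprod (fun i => U i (v i) * pauli (p i) * (U i (v i))ᴴ) := by
      intro v
      show mprod _ * mprod _ * (mprod _)ᴴ = mprod _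
      rw [mprod_conjTranspose, mprod_mul, mprod_mul]
    have hFB : F (kprod B) = (Fintype.card (∀ i, κ i) : ℂ)⁻¹ *
        ∑ v : ∀ i, κ i, ∑ b : Fin n → Fin 2,
          ∏ i, ((E₁ (U i (v i) * B i * (U i (v i))ᴴ)) (b i) (b i) *
            ((U i (v i) * pauli (p i) * (U i (v i))ᴴ) (b i) (b i))^2) := by
      show (Fintype.card (∀ i, κ i) : ℂ)⁻¹ * _ = _
      congr 1
      refine Finset.sum_congr rfl fun v _ => Finset.sum_congr rfl fun b _ => ?_
      rw [h1, h2, hEn, kprod_apply, kprod_apply, ← Finset.prod_pow, ← Finset.prod_mul_distrib]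
    rw [hFB]
    have hb : ∀ v : ∀ i, κ i, ∑ b : Fin n → Fin 2,
        ∏ i, ((E₁ (U i (v i) * B i * (U i (v i))ᴴ)) (b i) (b i) *
          ((U i (v i) * pauli (p i) * (U i (v i))ᴴ) (b i) (b i))^2)
        = ∏ i, ∑ c : Fin 2, ((E₁ (U i (v i) * B i * (U i (v i))ᴴ)) c c *
          ((U i (v i) * pauli (p i) * (U i (v i))ᴴ) c c)^2) := by
      intro v
      exact sum_pi_prod (κ := fun _ => Fin 2)
        (fun i c => (E₁ (U i (v i) * B i * (U i (v i))ᴴ)) c c *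
          ((U i (v i) * pauli (p i) * (U i (v i))ᴴ) c c)^2)
    rw [Finset.sum_congr rfl fun v _ => hb v,
      sum_pi_prod (fun i k => ∑ c : Fin 2, ((E₁ (U i k * B i * (U i k)ᴴ)) c c *
        ((U i k * pauli (p i) * (U i k)ᴴ) c c)^2))]
    have hcard : (Fintype.card (∀ i, κ i) : ℂ)⁻¹ = ∏ i, (Fintype.card (κ i) : ℂ)⁻¹ := by
      rw [Fintype.card_pi]
      push_cast
      rw [← Finset.prod_inv_distrib]
    rw [hcard, ← Finset.prod_mul_distrib]
    have hfac : ∀ i, (Fintype.card (κ i) : ℂ)⁻¹ * ∑ k, ∑ c : Fin 2,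
        ((E₁ (U i k * B i * (U i k)ᴴ)) c c * ((U i k * pauli (p i) * (U i k)ᴴ) c c)^2)
          = (if p i = 0 then (1:ℂ) else 3⁻¹) * (B i).trace := fun i =>
      single (U i) (hU i) (hdes i) E₁ htp (p i) (B i)
    rw [Finset.prod_congr rfl fun i _ => hfac i, Finset.prod_mul_distrib]
  have hA : A = ∑ x : Fin n → Fin 2, ∑ y : Fin n → Fin 2,
      A x y • kprod (fun i => Matrix.single (x i) (y i) (1:ℂ)) := by
    conv_lhs => rw [Matrix.matrix_eq_sum_single A]
    refine Finset.sum_congr rfl fun x _ => Finset.sum_congr rfl fun y _ => ?_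
    rw [kprod_std, Matrix.smul_single, smul_eq_mul, mul_one]
  have hC : ∏ i, (if p i = 0 then (1:ℂ) else 3⁻¹)
      = ((3 : ℂ) ^ (Finset.univ.filter fun i => p i ≠ 0).card)⁻¹ := by
    rw [Finset.prod_ite, Finset.prod_const, Finset.prod_const, one_pow, one_mul, inv_pow]
  calc F A = F (∑ x : Fin n → Fin 2, ∑ y : Fin n → Fin 2,
        A x y • kprod (fun i => Matrix.single (x i) (y i) (1:ℂ))) := by rw [← hA]
    _ = ∑ x : Fin n → Fin 2, ∑ y : Fin n → Fin 2,
        A x y * F (kprod (fun i => Matrix.single (x i) (y i) (1:ℂ))) := by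
        rw [map_sum]
        refine Finset.sum_congr rfl fun x _ => ?_
        rw [map_sum]
        refine Finset.sum_congr rfl fun y _ => ?_
        rw [LinearMap.map_smul, smul_eq_mul]
    _ = ∑ x : Fin n → Fin 2, ∑ y : Fin n → Fin 2,
        A x y * ((∏ i, (if p i = 0 then (1:ℂ) else 3⁻¹)) * (if x = y then 1 else 0)) := by
        refine Finset.sum_congr rfl fun x _ => Finset.sum_congr rfl fun y _ => ?_
        rw [hkey]
        congr 2
        rw [Finset.prod_congr rfl fun i _ => trace_std_ite (x i) (y i), Fintype.prod_boole]
        by_cases hxy : x = y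
        · simp [hxy]
        · have hne : ¬ ∀ i, x i = y i := fun h => hxy (funext h)
          simp [hxy, hne]
    _ = ((3 : ℂ) ^ (Finset.univ.filter fun i => p i ≠ 0).card)⁻¹ * A.trace := by
        rw [← hC]
        have hx : ∀ x : Fin n → Fin 2, ∑ y : Fin n → Fin 2,
            A x y * ((∏ i, (if p i = 0 then (1:ℂ) else 3⁻¹)) * (if x = y then 1 else 0))
            = (∏ i, (if p i = 0 then (1:ℂ) else 3⁻¹)) * A x x := by
          intro x
          rw [Finset.sum_congr rfl (fun y _ => show A x y * (_ * (if x = y then (1:ℂ) else 0))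
            = if x = y then (∏ i, (if p i = 0 then (1:ℂ) else 3⁻¹)) * A x y else 0 by
              split_ifs <;> ring)]
          rw [Finset.sum_ite_eq]
          simp
        rw [Finset.sum_congr rfl fun x _ => hx x, ← Finset.mul_sum]
        rfl

end NoisyShadows
end
end
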